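/- Let b > 1, q a prime, and v ≥ 1. Then there exists a prime P with P ∤ b and q^v dividing ord_P(b); equivalently, some prime P satisfies that the multiplicative order of b modulo P is divisible by q^v. -/

import Mathlib

open Finset

/-- For odd prime `q`, if `q ∣ c - 1` (and `c ≥ 1`) then the geometric sum
`∑_{i<q} c^i ≡ q (mod q^2)`. -/
lemma aux_sum_mod_sq (q : ℕ) (hq : q.Prime) (hq2 : q ≠ 2) (c : ℕ) (hc1 : 1 ≤ c)
    (hc : q ∣ c - 1) :
    ((∑ i ∈ Finset.range q, c ^ i : ℕ) : ZMod (q ^ 2)) = (q : ZMod (q ^ 2)) := by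
  obtain ⟨s, hs⟩ := hc
  have hcs : c = q * s + 1 := by omega
  have hqq : ((q : ZMod (q ^ 2)) * q) = 0 := by
    have := ZMod.natCast_self (q ^ 2)
    push_cast at this
    rw [← this]; ring
  have key : ∀ i : ℕ, ((c : ZMod (q ^ 2))) ^ i = 1 + (i : ZMod (q ^ 2)) * (q * s) := by
    intro i
    induction i with
    | zero => simp
    | succ n ih =>
        have hcc : ((c : ZMod (q ^ 2))) = (q : ZMod (q^2)) * s + 1 := by
          rw [hcs]; push_cast; ring
        rw [pow_succ ((c : ℕ) : ZMod (q^2)) n, ih, hcc]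
        have : (1 + (n : ZMod (q^2)) * (q * s)) * ((q:ZMod (q^2)) * s + 1)
            = 1 + ((n:ZMod (q^2)) + 1) * (q * s) + ((q : ZMod (q^2)) * q) * (n * s * s) := by
          ring
        rw [this, hqq]
        push_cast
        ring
  push_cast
  rw [Finset.sum_congr rfl (fun i _ => key i), Finset.sum_add_distrib]
  simp only [Finset.sum_const, Finset.card_range, nsmul_eq_mul, mul_one]
  rw [← Finset.sum_mul]
  have hgauss : (q : ℕ) ∣ ∑ i ∈ Finset.range q, i := by
    have h2 := Finset.sum_range_id_mul_two q
    have hodd : ¬ (q ∣ 2) := by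
      intro h
      exact hq2 ((Nat.prime_dvd_prime_iff_eq hq Nat.prime_two).1 h)
    have : q ∣ (∑ i ∈ Finset.range q, i) * 2 := h2 ▸ Dvd.intro _ rfl
    exact (Nat.Coprime.dvd_of_dvd_mul_right
      (Nat.Prime.coprime_iff_not_dvd hq |>.2 hodd) this)
  obtain ⟨m, hm⟩ := hgauss
  have : ((∑ i ∈ Finset.range q, i : ℕ) : ZMod (q ^ 2)) * (q * s) = 0 := by
    rw [hm]
    push_cast
    rw [show ((q : ZMod (q^2)) * m * (q * s)) = ((q : ZMod (q^2)) * q) * (m * s) by ring, hqq,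
      zero_mul]
  rw [show (∑ i ∈ Finset.range q, (i : ZMod (q^2))) = ((∑ i ∈ Finset.range q, i : ℕ) : ZMod (q^2)) by push_cast; rfl]
  rw [this, add_zero]

theorem stmt15 (b q v : ℕ) (hb : 1 < b) (hq : q.Prime) (hv : 1 ≤ v) :
    ∃ P : ℕ, P.Prime ∧ ¬ P ∣ b ∧ q ^ v ∣ orderOf (b : ZMod P) := by
  -- choose exponent u ≥ v, with u ≥ 2 when q = 2
  set u : ℕ := if q = 2 then max v 2 else v with hu_def
  have huv : v ≤ u := by unfold u; split <;> omega
  have hu1 : 1 ≤ u := le_trans hv huv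
  set c : ℕ := b ^ q ^ (u - 1) with hc_def
  have hc2 : 2 ≤ c := by
    calc 2 ≤ b := hb
    _ = b ^ 1 := (pow_one b).symm
    _ ≤ b ^ q ^ (u-1) := Nat.pow_le_pow_right (by omega) (Nat.one_le_pow _ _ hq.pos)
  have hcq : c ^ q = b ^ q ^ u := by
    rw [hc_def, ← pow_mul, ← pow_succ, Nat.sub_add_cancel hu1]
  set N : ℕ := ∑ i ∈ Finset.range q, c ^ i with hN_def
  have hNq : q < N := by
    have : ∑ i ∈ Finset.range q, 1 < ∑ i ∈ Finset.range q, c ^ i := by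
      apply Finset.sum_lt_sum (fun i _ => Nat.one_le_pow _ _ (by omega))
      exact ⟨1, Finset.mem_range.2 hq.two_le, by rw [pow_one]; omega⟩
    simpa using this
  -- q ∣ N → q ∣ c - 1
  have hqdvd : q ∣ N → q ∣ c - 1 := by
    intro h
    haveI : Fact q.Prime := ⟨hq⟩
    have h1 : ((N : ℕ) : ZMod q) = 0 := (ZMod.natCast_eq_zero_iff _ _).2 h
    have h2 : ((c : ZMod q)) ^ q - 1 = 0 := by
      have := geom_sum_mul (c : ZMod q) q
      rw [hN_def] at h1
      push_cast at h1
      rw [h1, zero_mul] at this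
      exact this.symm
    have h3 : (c : ZMod q) = 1 := by
      have := ZMod.pow_card (c : ZMod q)
      rw [sub_eq_zero] at h2
      rw [← this, h2]
    have : ((c - 1 : ℕ) : ZMod q) = 0 := by
      push_cast [Nat.cast_sub (le_trans one_le_two hc2)]
      rw [h3]; ring
    exact (ZMod.natCast_eq_zero_iff _ _).1 this
  -- key claim: ¬ q^2 ∣ N
  have hq2N : ¬ q ^ 2 ∣ N := by
    intro hdvd
    have hqN : q ∣ N := dvd_trans (dvd_pow_self q (by norm_num)) hdvd
    have hc1 : q ∣ c - 1 := hqdvd hqN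
    have hmod : ((N : ℕ) : ZMod (q ^ 2)) = (q : ZMod (q ^ 2)) := by
      by_cases hq2 : q = 2
      · -- q = 2, u ≥ 2, c is an odd square, so c ≡ 1 mod 4
        subst hq2
        have hu2 : 2 ≤ u := by unfold u; simp
        obtain ⟨d, hdodd, hdd⟩ : ∃ d, ¬ 2 ∣ d ∧ c = d * d := by
          refine ⟨b ^ 2 ^ (u - 2), ?_, ?_⟩
          · intro h2d
            have h2c : 2 ∣ c := by
              rw [hc_def, show (u - 1) = (u - 2) + 1 by omega, pow_succ, pow_mul]
              exact dvd_pow h2d two_ne_zero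
            omega
          · rw [hc_def, show (u - 1) = (u - 2) + 1 by omega, pow_succ, pow_mul, sq]
        obtain ⟨k, hk⟩ : ∃ k, d = 2 * k + 1 := ⟨d / 2, by omega⟩
        have hcval : c = 4 * (k * k + k) + 1 := by rw [hdd, hk]; ring
        rw [show (4 : ℕ) * (k * k + k) + 1 = 4 * (k * k + k) + 1 from rfl] at hcval
        obtain ⟨k, hcval⟩ : ∃ k, c = 4 * k + 1 := ⟨k * k + k, hcval⟩
        have : N = c + 1 := by
          rw [hN_def, Finset.sum_range_succ, Finset.sum_range_one, pow_zero, pow_one]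
          omega
        rw [this, hcval]
        push_cast
        have h40 : ((4 : ℕ) : ZMod (2 ^ 2)) = 0 := by decide
        push_cast at h40
        rw [show ((4:ZMod (2^2)) * k + 1 + 1) = (4:ZMod (2^2)) * k + 2 by ring, h40]
        norm_num
      · exact aux_sum_mod_sq q hq hq2 c (by omega) hc1
    have : ((N : ℕ) : ZMod (q ^ 2)) = 0 := (ZMod.natCast_eq_zero_iff _ _).2 hdvd
    rw [hmod] at this
    have : q ^ 2 ∣ q := (ZMod.natCast_eq_zero_iff _ _).1 this
    have := Nat.le_of_dvd hq.pos this
    nlinarith [hq.two_le]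
  -- get a prime divisor P of N with P ≠ q
  have hNpos : N ≠ 0 := by omega
  have hP : ∃ P : ℕ, P.Prime ∧ P ∣ N ∧ P ≠ q := by
    by_contra h
    push_neg at h
    have hNk : N = q ^ N.primeFactorsList.length :=
      Nat.eq_prime_pow_of_unique_prime_dvd hNpos (fun hd hdN => h _ hd hdN)
    have hlen : 2 ≤ N.primeFactorsList.length := by
      by_contra hl
      push_neg at hl
      have hle : N ≤ q := by
        rw [hNk]
        calc q ^ N.primeFactorsList.length ≤ q ^ 1 := Nat.pow_le_pow_right hq.pos (by omega)
          _ = q := pow_one q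
      omega
    exact hq2N (hNk ▸ pow_dvd_pow q hlen)
  obtain ⟨P, hPp, hPN, hPq⟩ := hP
  haveI : Fact P.Prime := ⟨hPp⟩
  -- b^(q^u) = 1 in ZMod P
  have hN0 : ((N : ℕ) : ZMod P) = 0 := (ZMod.natCast_eq_zero_iff _ _).2 hPN
  have hNsum : ((N : ℕ) : ZMod P) = ∑ i ∈ Finset.range q, ((c : ZMod P)) ^ i := by
    rw [hN_def]; push_cast; rfl
  have hbpow : ((b : ZMod P)) ^ (q ^ u) = 1 := by
    have := geom_sum_mul (c : ZMod P) q
    rw [← hNsum, hN0, zero_mul] at this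
    have h2 : ((c : ZMod P)) ^ q = 1 := by
      have := sub_eq_zero.1 this.symm
      linear_combination this
    calc ((b : ZMod P)) ^ (q ^ u) = ((c : ZMod P)) ^ q := by
          rw [← Nat.cast_pow, ← Nat.cast_pow, hcq]
      _ = 1 := h2
  have hPb : ¬ P ∣ b := by
    intro hPb
    have hb0 : (b : ZMod P) = 0 := (ZMod.natCast_eq_zero_iff _ _).2 hPb
    rw [hb0, zero_pow (pow_ne_zero u hq.ne_zero)] at hbpow
    exact zero_ne_one hbpow
  -- order divides q^u and is not a divisor of q^(u-1)
  have hord : orderOf ((b : ZMod P)) ∣ q ^ u := orderOf_dvd_of_pow_eq_one hbpow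
  obtain ⟨m, hmu, hm⟩ := (Nat.dvd_prime_pow hq).1 hord
  have hmeq : m = u := by
    by_contra hmne
    have hmlt : m ≤ u - 1 := by omega
    have hc1 : ((c : ZMod P)) = 1 := by
      have : orderOf ((b : ZMod P)) ∣ q ^ (u - 1) :=
        hm ▸ pow_dvd_pow q hmlt
      have := orderOf_dvd_iff_pow_eq_one.1 this
      rw [hc_def]; push_cast; exact this
    have : ((N : ℕ) : ZMod P) = (q : ZMod P) := by
      rw [hNsum, Finset.sum_congr rfl (fun i _ => by rw [hc1, one_pow])]
      simp
    rw [hN0] at this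
    have : P ∣ q := (ZMod.natCast_eq_zero_iff _ _).1 this.symm
    exact hPq ((Nat.prime_dvd_prime_iff_eq hPp hq).1 this)
  refine ⟨P, hPp, hPb, ?_⟩
  rw [hm, hmeq]
  exact pow_dvd_pow q huv
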